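/- Let A be a unital associative ℝ-algebra with involution, I a left ideal of A, and a ∈ A. Then the following are equivalent: (i) π(a)v = 0 for every *-representation π of A on a real inner product space and every vector v in that space with π(u)v = 0 for all u ∈ I; (ii) for every ℝ-linear functional f : A → ℝ with f(b*) = f(b) for all b ∈ A, f(s) ≥ 0 for all s ∈ Σ_A, and f(u*u) = 0 for all u ∈ I, one has f(a*a) = 0. (This is the double-dual form of the statement that the set in (i) equals {a ∈ A : −a*a lies in the closure of Σ_A − Σ_I in the finest locally convex topology on A_h}, where Σ_I is the set of finite sums of u*u with u ∈ I.) -/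

import Mathlib

noncomputable section

namespace Stmt14Aux

variable {A : Type} [Ring A] [Algebra ℝ A] [StarRing A] [StarModule ℝ A]

/-- The GNS bilinear form associated to a linear functional. -/
def Bf (f : A →ₗ[ℝ] ℝ) : A →ₗ[ℝ] A →ₗ[ℝ] ℝ :=
  LinearMap.mk₂ ℝ (fun x y => f (star x * y))
    (fun m n y => by
      show f (star (m + n) * y) = f (star m * y) + f (star n * y)
      rw [star_add, add_mul, map_add])
    (fun c m y => by
      show f (star (c • m) * y) = c • f (star m * y)
      rw [star_smul, star_trivial, smul_mul_assoc, map_smul])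
    (fun x m n => by
      show f (star x * (m + n)) = f (star x * m) + f (star x * n)
      rw [mul_add, map_add])
    (fun c x y => by
      show f (star x * c • y) = c • f (star x * y)
      rw [mul_smul_comm, map_smul])

@[simp] lemma Bf_apply (f : A →ₗ[ℝ] ℝ) (x y : A) : Bf f x y = f (star x * y) := rfl

lemma Bf_symm {f : A →ₗ[ℝ] ℝ} (hherm : ∀ b : A, f (star b) = f b) (x y : A) :
    Bf f x y = Bf f y x := by
  rw [Bf_apply, Bf_apply, ← hherm (star y * x), star_mul, star_star]

/-- Cauchy–Schwarz null-vector lemma for the semidefinite GNS form. -/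
lemma Bf_cs {f : A →ₗ[ℝ] ℝ} (hherm : ∀ b : A, f (star b) = f b)
    (hpos1 : ∀ x : A, 0 ≤ f (star x * x)) {x : A} (hx : Bf f x x = 0) (y : A) :
    Bf f y x = 0 := by
  have key : ∀ t : ℝ, 0 ≤ 2 * t * Bf f y x + t ^ 2 * Bf f y y := by
    intro t
    have h0 : 0 ≤ Bf f (x + t • y) (x + t • y) := hpos1 _
    have expand : Bf f (x + t • y) (x + t • y)
        = Bf f x x + t * Bf f x y + (t * Bf f y x + t ^ 2 * Bf f y y) := by
      simp only [map_add, map_smul, LinearMap.add_apply, LinearMap.smul_apply, smul_eq_mul]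
      ring
    rw [expand, hx, Bf_symm hherm x y] at h0
    linarith
  have hc0 : 0 ≤ Bf f y y := hpos1 y
  set b := Bf f y x with hb
  set c := Bf f y y with hc
  rcases eq_or_lt_of_le hc0 with h1 | h1
  · have := key (-b)
    nlinarith [sq_nonneg b]
  · have h2 := key (-b / c)
    have hc' : c ≠ 0 := ne_of_gt h1
    have e : 2 * (-b / c) * b + (-b / c) ^ 2 * c = -(b ^ 2) / c := by
      field_simp
      ring
    rw [e] at h2
    have h3 : 0 ≤ -(b ^ 2) := by
      have h4 := mul_nonneg h2 (le_of_lt h1)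
      rwa [div_mul_cancel₀ _ hc'] at h4
    have h5 : b ^ 2 = 0 := le_antisymm (by linarith) (sq_nonneg b)
    have h6 : b = 0 := by nlinarith [sq_nonneg b]
    exact h6

/-- The null space of the GNS form. -/
def Nf (f : A →ₗ[ℝ] ℝ) : Submodule ℝ A := LinearMap.ker (Bf f).flip

lemma mem_Nf {f : A →ₗ[ℝ] ℝ} {x : A} : x ∈ Nf f ↔ ∀ y : A, Bf f y x = 0 := by
  rw [Nf, LinearMap.mem_ker]
  constructor
  · intro hx y
    have := congrArg (fun g => g y) hx
    simpa using this
  · intro hx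
    ext y
    simpa using hx y

lemma mem_Nf' {f : A →ₗ[ℝ] ℝ} (hherm : ∀ b : A, f (star b) = f b)
    (hpos1 : ∀ x : A, 0 ≤ f (star x * x)) {x : A} :
    x ∈ Nf f ↔ Bf f x x = 0 :=
  ⟨fun hx => mem_Nf.1 hx x, fun hx => mem_Nf.2 (Bf_cs hherm hpos1 hx)⟩

lemma Nf_mul_mem {f : A →ₗ[ℝ] ℝ} (b : A) {x : A} (hx : x ∈ Nf f) : b * x ∈ Nf f := by
  rw [mem_Nf]
  intro y
  have e : star y * (b * x) = star (star b * y) * x := by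
    rw [star_mul, star_star, mul_assoc]
  rw [Bf_apply, e, ← Bf_apply]
  exact mem_Nf.1 hx (star b * y)

/-- The GNS form descends to the quotient. -/
def Gf (f : A →ₗ[ℝ] ℝ) (hherm : ∀ b : A, f (star b) = f b) :
    (A ⧸ Nf f) →ₗ[ℝ] (A ⧸ Nf f) →ₗ[ℝ] ℝ :=
  (Nf f).liftQ
    { toFun := fun x => (Nf f).liftQ (Bf f x)
        (fun n hn => by
          rw [LinearMap.mem_ker]
          exact mem_Nf.1 hn x)
      map_add' := by
        intro x y
        apply Submodule.linearMap_qext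
        ext z
        simp
      map_smul' := by
        intro c x
        apply Submodule.linearMap_qext
        ext z
        simp }
    (by
      intro n hn
      rw [LinearMap.mem_ker]
      apply Submodule.linearMap_qext
      ext z
      have hz := (Bf_symm hherm n z).trans (mem_Nf.1 hn z)
      simpa using hz)

@[simp] lemma Gf_apply (f : A →ₗ[ℝ] ℝ) (hherm : ∀ b : A, f (star b) = f b) (x y : A) :
    Gf f hherm (Submodule.Quotient.mk x) (Submodule.Quotient.mk y) = f (star x * y) := by
  rw [Gf]
  simp

/-- The GNS inner-product core on the quotient. -/
def coreOf (f : A →ₗ[ℝ] ℝ) (hherm : ∀ b : A, f (star b) = f b)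
    (hpos1 : ∀ x : A, 0 ≤ f (star x * x)) : InnerProductSpace.Core ℝ (A ⧸ Nf f) where
  inner u w := Gf f hherm u w
  conj_inner_symm := by
    intro u w
    obtain ⟨x, rfl⟩ := Submodule.Quotient.mk_surjective (Nf f) u
    obtain ⟨y, rfl⟩ := Submodule.Quotient.mk_surjective (Nf f) w
    simp only [Gf_apply, starRingEnd_apply, star_trivial]
    exact Bf_symm hherm y x
  re_inner_nonneg := by
    intro u
    obtain ⟨x, rfl⟩ := Submodule.Quotient.mk_surjective (Nf f) u
    simpa using hpos1 x
  definite := by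
    intro u hu
    obtain ⟨x, rfl⟩ := Submodule.Quotient.mk_surjective (Nf f) u
    rw [Submodule.Quotient.mk_eq_zero]
    refine (mem_Nf' hherm hpos1).2 ?_
    simpa using hu
  add_left := by
    intro u w z
    simp [map_add]
  smul_left := by
    intro u w r
    simp

/-- The GNS representation by left multiplication on the quotient. -/
def piOf (f : A →ₗ[ℝ] ℝ) : A →ₐ[ℝ] ((A ⧸ Nf f) →ₗ[ℝ] (A ⧸ Nf f)) where
  toFun b := (Nf f).mapQ (Nf f) (LinearMap.mulLeft ℝ b) (fun x hx => Nf_mul_mem b hx)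
  map_one' := by
    apply Submodule.linearMap_qext
    ext x
    simp [Submodule.mapQ_apply]
  map_mul' := by
    intro b c
    apply Submodule.linearMap_qext
    ext x
    simp [Submodule.mapQ_apply, mul_assoc]
    rfl
  map_zero' := by
    apply Submodule.linearMap_qext
    ext x
    simp [Submodule.mapQ_apply]
  map_add' := by
    intro b c
    apply Submodule.linearMap_qext
    ext x
    show (Submodule.Quotient.mk ((b + c) * x) : A ⧸ Nf f) =
      Submodule.Quotient.mk (b * x) + Submodule.Quotient.mk (c * x)
    rw [add_mul, Submodule.Quotient.mk_add]
  commutes' := by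
    intro r
    apply Submodule.linearMap_qext
    ext x
    simp only [LinearMap.comp_apply, Submodule.mkQ_apply, Submodule.mapQ_apply,
      LinearMap.mulLeft_apply, Module.algebraMap_end_apply, ← Algebra.smul_def,
      Submodule.Quotient.mk_smul]
    show (Submodule.Quotient.mk (algebraMap ℝ A r * x) : A ⧸ Nf f) = _
    rw [← Algebra.smul_def, Submodule.Quotient.mk_smul]

@[simp] lemma piOf_apply (f : A →ₗ[ℝ] ℝ) (b x : A) :
    piOf f b (Submodule.Quotient.mk x) = Submodule.Quotient.mk (b * x) := by
  rw [piOf]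
  simp [Submodule.mapQ_apply]
  rfl

end Stmt14Aux

open Stmt14Aux in
/-- For a left ideal `I` of a unital `ℝ`-algebra with involution and `a ∈ A`, membership of
`a` in `√R(I)` (vanishing at every `*`-representation point annihilating `I`) is equivalent
to the vanishing of `f(a*a)` for every positive hermitian linear functional `f` that kills
`Σ_I`; this is the double-dual form of `√R(I) = {a : −a*a ∈ closure (Σ_A − Σ_I)}`. -/
theorem stmt14 (A : Type) [Ring A] [Algebra ℝ A] [StarRing A] [StarModule ℝ A]
    (I : Submodule A A) (a : A) :
    (∀ (V : Type) [NormedAddCommGroup V] [InnerProductSpace ℝ V],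
      ∀ (π : A →ₐ[ℝ] (V →ₗ[ℝ] V)),
        (∀ (b : A) (u w : V), (inner ℝ (π b u) w : ℝ) = inner ℝ u (π (star b) w)) →
        ∀ v : V, (∀ u ∈ I, π u v = 0) → π a v = 0)
    ↔
    (∀ f : A →ₗ[ℝ] ℝ,
      (∀ b : A, f (star b) = f b) →
      (∀ (r : ℕ) (b : Fin r → A), 0 ≤ f (∑ i, star (b i) * b i)) →
      (∀ u ∈ I, f (star u * u) = 0) →
      f (star a * a) = 0) := by
  constructor
  · intro h f hherm hpos hIf
    have hpos1 : ∀ x : A, 0 ≤ f (star x * x) := by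
      intro x
      simpa using hpos 1 (fun _ => x)
    letI : NormedAddCommGroup (A ⧸ Nf f) :=
      (coreOf f hherm hpos1).toNormedAddCommGroup
    letI : InnerProductSpace ℝ (A ⧸ Nf f) := InnerProductSpace.ofCore (coreOf f hherm hpos1).toCore
    have hinner : ∀ x y : A,
        (inner ℝ (Submodule.Quotient.mk x : A ⧸ Nf f) (Submodule.Quotient.mk y) : ℝ)
          = f (star x * y) := by
      intro x y
      exact Gf_apply f hherm x y
    have hadj : ∀ (b : A) (u w : A ⧸ Nf f),
        (inner ℝ (piOf f b u) w : ℝ) = inner ℝ u (piOf f (star b) w) := by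
      intro b u w
      obtain ⟨x, rfl⟩ := Submodule.Quotient.mk_surjective (Nf f) u
      obtain ⟨y, rfl⟩ := Submodule.Quotient.mk_surjective (Nf f) w
      rw [piOf_apply, piOf_apply, hinner, hinner, star_mul, mul_assoc]
    have hv : ∀ u ∈ I, piOf f u (Submodule.Quotient.mk 1 : A ⧸ Nf f) = 0 := by
      intro u hu
      rw [piOf_apply, mul_one, Submodule.Quotient.mk_eq_zero]
      exact (mem_Nf' hherm hpos1).2 (by simpa using hIf u hu)
    have := h (A ⧸ Nf f) (piOf f) hadj (Submodule.Quotient.mk 1) hv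
    rw [piOf_apply, mul_one, Submodule.Quotient.mk_eq_zero, mem_Nf' hherm hpos1] at this
    simpa using this
  · intro h V _ _ π hadj v hv
    set f : A →ₗ[ℝ] ℝ :=
      { toFun := fun b => inner ℝ v (π b v)
        map_add' := by intro x y; simp [inner_add_right]
        map_smul' := by intro c x; simp [real_inner_smul_right] } with hf
    have key : f (star a * a) = 0 := by
      apply h f
      · intro b
        simp only [hf, LinearMap.coe_mk, AddHom.coe_mk]
        rw [← hadj b v v, real_inner_comm]
      · intro r b
        simp only [hf, LinearMap.coe_mk, AddHom.coe_mk, map_sum, LinearMap.sum_apply,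
          inner_sum]
        apply Finset.sum_nonneg
        intro i _
        rw [map_mul]
        simp only [Module.End.mul_apply]
        rw [← hadj (b i) v (π (b i) v)]
        exact real_inner_self_nonneg
      · intro u hu
        simp only [hf, LinearMap.coe_mk, AddHom.coe_mk, map_mul, Module.End.mul_apply,
          hv u hu, map_zero, inner_zero_right]
    have : (inner ℝ (π a v) (π a v) : ℝ) = 0 := by
      rw [hadj a v (π a v)]
      simpa [hf, map_mul] using key
    exact inner_self_eq_zero.mp this

end
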